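/- Let p be an odd prime, r ≥ 1, R = ℤ/p^rℤ, and H the unique subgroup of R^× of order e dividing p−1. If x₀ ∈ R does not lie in p^{r-1}R, then the map (k, h) ↦ k + h·x₀ from (p^{r-1}R) × H to R is injective. -/

import Mathlib

-- every non-unit of ZMod (p^r) is nilpotent
lemma stmt3_aux_nil (p r : ℕ) (hp : p.Prime) (hr : 1 ≤ r) (x : ZMod (p ^ r))
    (hx : ¬ IsUnit x) : IsNilpotent x := by
  haveI : NeZero (p ^ r) := ⟨pow_ne_zero r hp.pos.ne'⟩
  have hx' : ¬ IsUnit ((x.val : ZMod (p ^ r))) := by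
    rwa [ZMod.natCast_rightInverse x]
  rw [ZMod.isUnit_iff_coprime] at hx'
  have hpd : p ∣ x.val := by
    by_contra hpd
    exact hx' ((Nat.coprime_pow_right_iff hr x.val p).mpr
      ((Nat.Prime.coprime_iff_not_dvd hp).mpr hpd).symm)
  obtain ⟨c, hc⟩ := hpd
  refine ⟨r, ?_⟩
  have : x = (p : ZMod (p ^ r)) * (c : ZMod (p ^ r)) := by
    conv_lhs => rw [← ZMod.natCast_rightInverse x]
    push_cast [hc]; ring
  rw [this, mul_pow, ← Nat.cast_pow, ZMod.natCast_self, zero_mul]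

-- v^e = 1, v ≠ 1 implies v - 1 is a unit
lemma stmt3_aux_unit (p r e : ℕ) (hp : p.Prime) (hr : 1 ≤ r) (he : 0 < e)
    (hdvd : e ∣ p - 1) (v : ZMod (p ^ r)) (hv : v ^ e = 1) (hne : v ≠ 1) :
    IsUnit (v - 1) := by
  haveI : NeZero (p ^ r) := ⟨pow_ne_zero r hp.pos.ne'⟩
  by_contra hnu
  have hnil : IsNilpotent (v - 1) := stmt3_aux_nil p r hp hr _ hnu
  set S : ZMod (p ^ r) := ∑ i ∈ Finset.range e, v ^ i with hS
  have hmul : S * (v - 1) = 0 := by rw [hS, geom_sum_mul, hv, sub_self]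
  -- S = e + nilpotent
  have hdvd2 : (v - 1) ∣ (S - (e : ZMod (p ^ r))) := by
    have : S - (e : ZMod (p ^ r)) = ∑ i ∈ Finset.range e, (v ^ i - 1) := by
      rw [Finset.sum_sub_distrib, Finset.sum_const, Finset.card_range,
        nsmul_eq_mul, mul_one]
    rw [this]
    refine Finset.dvd_sum fun i _ => ?_
    simpa using sub_dvd_pow_sub_pow v 1 i
  have hnil2 : IsNilpotent (S - (e : ZMod (p ^ r))) := by
    obtain ⟨c, hc⟩ := hdvd2
    rw [hc]
    exact (Commute.all _ _).isNilpotent_mul_right hnil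
  have heunit : IsUnit ((e : ℕ) : ZMod (p ^ r)) := by
    rw [ZMod.isUnit_iff_coprime]
    refine Nat.Coprime.pow_right r ?_
    have hp2 := hp.two_le
    have hep : ¬ p ∣ e := by
      intro h
      have h1 : e ≤ p - 1 := Nat.le_of_dvd (by omega) hdvd
      have h2 : p ≤ e := Nat.le_of_dvd he h
      omega
    exact ((Nat.Prime.coprime_iff_not_dvd hp).mpr hep).symm
  have hSunit : IsUnit S := by
    have : S = (S - (e : ZMod (p ^ r))) + (e : ZMod (p ^ r)) := by ring
    rw [this]
    exact hnil2.isUnit_add_right_of_commute heunit (Commute.all _ _)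
  obtain ⟨u, hu⟩ := hSunit
  have : v - 1 = 0 := by
    have := congrArg (fun t => (↑u⁻¹ : ZMod (p ^ r)) * t) hmul
    simpa [← hu, ← mul_assoc] using this
  exact hne (by linear_combination this)

theorem stmt3 (p r e : ℕ) (hp : p.Prime) (hodd : Odd p) (hr : 1 ≤ r)
    (he : 0 < e) (hdvd : e ∣ p - 1)
    (H : Subgroup (ZMod (p ^ r))ˣ) (hH : Nat.card H = e)
    (x₀ : ZMod (p ^ r))
    (hx₀ : x₀ ∉ Ideal.span {(p : ZMod (p ^ r)) ^ (r - 1)}) :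
    Function.Injective
      (fun kh : (Ideal.span {(p : ZMod (p ^ r)) ^ (r - 1)} : Ideal (ZMod (p ^ r))) × H =>
        (kh.1 : ZMod (p ^ r)) + ((kh.2 : (ZMod (p ^ r))ˣ) : ZMod (p ^ r)) * x₀) := by
  set I : Ideal (ZMod (p ^ r)) := Ideal.span {(p : ZMod (p ^ r)) ^ (r - 1)} with hI
  rintro ⟨k₁, h₁⟩ ⟨k₂, h₂⟩ heq
  simp only at heq
  -- claim h₁ = h₂
  have hkey : (h₁ : (ZMod (p ^ r))ˣ) = (h₂ : (ZMod (p ^ r))ˣ) := by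
    by_contra hne
    set a : ZMod (p ^ r) := ((h₁ : (ZMod (p ^ r))ˣ) : ZMod (p ^ r))
    set b : ZMod (p ^ r) := ((h₂ : (ZMod (p ^ r))ˣ) : ZMod (p ^ r))
    have hmem : (a - b) * x₀ ∈ I := by
      have : (a - b) * x₀ = (k₂ : ZMod (p ^ r)) - (k₁ : ZMod (p ^ r)) := by
        linear_combination heq
      rw [this]
      exact I.sub_mem k₂.2 k₁.2
    -- a - b is a unit
    have hunit : IsUnit (a - b) := by
      set u : H := h₁ * h₂⁻¹ with hu
      haveI : Finite H := Nat.finite_of_card_ne_zero (by omega)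
      have hue : (u : (ZMod (p ^ r))ˣ) ^ e = 1 := by
        have h0 : u ^ e = 1 := by rw [← hH]; exact pow_card_eq_one'
        have := congrArg (Subtype.val) h0
        simpa using this
      have hve : (((u : (ZMod (p ^ r))ˣ) : ZMod (p ^ r))) ^ e = 1 := by
        rw [← Units.val_pow_eq_pow_val, hue, Units.val_one]
      have hvne : (((u : (ZMod (p ^ r))ˣ) : ZMod (p ^ r))) ≠ 1 := by
        intro h1
        apply hne
        have : (u : (ZMod (p ^ r))ˣ) = 1 := Units.ext (by simpa using h1)
        rw [hu] at this
        push_cast at this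
        exact mul_inv_eq_one.mp this
      have h1 : IsUnit ((((u : (ZMod (p ^ r))ˣ) : ZMod (p ^ r))) - 1) :=
        stmt3_aux_unit p r e hp hr he hdvd _ hve hvne
      have hab : a - b = b * ((((u : (ZMod (p ^ r))ˣ) : ZMod (p ^ r))) - 1) := by
        rw [hu]
        push_cast
        have h2 : b * (((h₂ : (ZMod (p ^ r))ˣ)⁻¹ : (ZMod (p ^ r))ˣ) : ZMod (p ^ r)) = 1 := Units.mul_inv _
        linear_combination (-a) * h2
      rw [hab]
      exact ((h₂ : (ZMod (p ^ r))ˣ).isUnit).mul h1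
    obtain ⟨w, hw⟩ := hunit
    apply hx₀
    have : x₀ = (↑w⁻¹ : ZMod (p ^ r)) * ((a - b) * x₀) := by
      rw [← mul_assoc, ← hw]
      simp
    rw [this]
    exact I.mul_mem_left _ hmem
  have hk : (k₁ : ZMod (p ^ r)) = (k₂ : ZMod (p ^ r)) := by
    rw [hkey] at heq
    exact add_right_cancel heq
  ext1
  · exact Subtype.ext hk
  · exact Subtype.ext hkey
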